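/- Let α ≠ 0 and γ > 0 be real numbers, λ > 0, and let θ be a real number with cosθ·sinθ = 0 (i.e. θ is an integer multiple of π/2). Then det(Y_γ(v), Z_{α,λ,θ}(v)) ≠ 0 for every v ≠ (0,0) if and only if μ₋ < γ < μ₊, where μ₊ = 1 + 2α² + 2|α|√(1+α²) and μ₋ = 1 + 2α² − 2|α|√(1+α²). -/

import Mathlib

/-- `det2 v w = v₁w₂ − v₂w₁`. -/
def det2 (v w : ℝ × ℝ) : ℝ := v.1 * w.2 - v.2 * w.1

/-- The real (node) vector field `Y_γ(x,y) = (x, γy)`. -/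
def Ynode (γ : ℝ) (v : ℝ × ℝ) : ℝ × ℝ := (v.1, γ * v.2)

/-- The rotation matrix by angle `θ`. -/
noncomputable def rotM (θ : ℝ) : Matrix (Fin 2) (Fin 2) ℝ :=
  !![Real.cos θ, -Real.sin θ; Real.sin θ, Real.cos θ]

/-- The matrix `M_α = [[1, −α],[α, 1]]` of the logarithmic vector field. -/
def Mlog (α : ℝ) : Matrix (Fin 2) (Fin 2) ℝ := !![1, -α; α, 1]

/-- `B_λ = diag(1,λ)`. -/
def BM (l : ℝ) : Matrix (Fin 2) (Fin 2) ℝ := !![1, 0; 0, l]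

/-- `B_λ⁻¹ = diag(1,1/λ)`. -/
noncomputable def BMinv (l : ℝ) : Matrix (Fin 2) (Fin 2) ℝ := !![1, 0; 0, 1 / l]

/-- The matrix `R_θ B_λ M_α B_λ⁻¹ R_{−θ}` of the pushforward of the
logarithmic vector field `X_α` by `R_θ ∘ B_λ`. -/
noncomputable def Zmat (α l θ : ℝ) : Matrix (Fin 2) (Fin 2) ℝ :=
  rotM θ * BM l * Mlog α * BMinv l * rotM (-θ)

/-- The pushforward of the logarithmic vector field `X_α` by `R_θ ∘ B_λ`,
as a vector field on `ℝ × ℝ`. -/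
noncomputable def Zfun (α l θ : ℝ) (v : ℝ × ℝ) : ℝ × ℝ :=
  ((Zmat α l θ).mulVec ![v.1, v.2] 0, (Zmat α l θ).mulVec ![v.1, v.2] 1)

/-- A binary quadratic form `Bx² + Exy + Ay²` with `B ≠ 0` is nonvanishing away
from the origin iff its discriminant is negative. -/
lemma quad_pos_iff (A B E : ℝ) (hB : B ≠ 0) :
    (∀ x y : ℝ, ¬(x = 0 ∧ y = 0) → B * x ^ 2 + E * (x * y) + A * y ^ 2 ≠ 0) ↔
      E ^ 2 - 4 * A * B < 0 := by
  constructor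
  · intro hall
    by_contra h
    push_neg at h
    have hsD : Real.sqrt (E ^ 2 - 4 * A * B) ^ 2 = E ^ 2 - 4 * A * B :=
      Real.sq_sqrt h
    set x := (-E + Real.sqrt (E ^ 2 - 4 * A * B)) / (2 * B) with hxdef
    have hx : 2 * B * x + E = Real.sqrt (E ^ 2 - 4 * A * B) := by
      rw [hxdef]; field_simp; ring
    have h4 : 4 * B * (B * x ^ 2 + E * (x * 1) + A * 1 ^ 2)
        = (2 * B * x + E) ^ 2 - (E ^ 2 - 4 * A * B) := by ring
    rw [hx, hsD, sub_self] at h4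
    have h5 : B * x ^ 2 + E * (x * 1) + A * 1 ^ 2 = 0 := by
      rcases mul_eq_zero.mp h4 with h' | h'
      · exact absurd h' (by simp [hB])
      · exact h'
    exact hall x 1 (by simp) h5
  · intro hD x y hxy h0
    rcases eq_or_ne y 0 with hy | hy
    · rw [hy] at h0 hxy
      have hx : x ≠ 0 := fun h => hxy ⟨h, rfl⟩
      have : B * x ^ 2 = 0 := by linarith [h0]; 
      rcases mul_eq_zero.mp this with h' | h'
      · exact hB h'
      · exact hx (pow_eq_zero_iff (n := 2) (by norm_num) |>.mp h')
    · have hy2 : 0 < y ^ 2 := by positivity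
      have h4 : (2 * B * x + E * y) ^ 2 + (4 * A * B - E ^ 2) * y ^ 2
          = 4 * B * (B * x ^ 2 + E * (x * y) + A * y ^ 2) := by ring
      rw [h0, mul_zero] at h4
      nlinarith [sq_nonneg (2 * B * x + E * y),
        mul_pos (by linarith : (0:ℝ) < 4 * A * B - E ^ 2) hy2]

/-- The discriminant condition is equivalent to `γ` lying in the `μ` interval. -/
lemma disc_iff_mu (α γ : ℝ) (hα : α ≠ 0) :
    (1 - γ) ^ 2 - 4 * (γ * α ^ 2) * 1 < 0 ↔
      (1 + 2 * α ^ 2 - 2 * |α| * Real.sqrt (1 + α ^ 2) < γ ∧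
        γ < 1 + 2 * α ^ 2 + 2 * |α| * Real.sqrt (1 + α ^ 2)) := by
  have hm2 : (2 * |α| * Real.sqrt (1 + α ^ 2)) ^ 2 = 4 * α ^ 2 * (1 + α ^ 2) := by
    rw [mul_pow, mul_pow, sq_abs, Real.sq_sqrt (by positivity)]
    ring
  have hm0 : 0 < 2 * |α| * Real.sqrt (1 + α ^ 2) := by
    have h1 : 0 < |α| := abs_pos.mpr hα
    have h2 : 0 < Real.sqrt (1 + α ^ 2) := Real.sqrt_pos.mpr (by positivity)
    positivity
  set m := 2 * |α| * Real.sqrt (1 + α ^ 2)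
  constructor
  · intro h
    constructor
    · by_contra hc
      push_neg at hc
      nlinarith [mul_nonneg (by linarith : (0:ℝ) ≤ 1 + 2 * α ^ 2 - m - γ)
        (by linarith : (0:ℝ) ≤ 1 + 2 * α ^ 2 + m - γ), hm2]
    · by_contra hc
      push_neg at hc
      nlinarith [mul_nonneg (by linarith : (0:ℝ) ≤ γ - (1 + 2 * α ^ 2 - m))
        (by linarith : (0:ℝ) ≤ γ - (1 + 2 * α ^ 2 + m)), hm2]
  · rintro ⟨h1, h2⟩
    nlinarith [mul_pos (by linarith : (0:ℝ) < γ - (1 + 2 * α ^ 2 - m))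
      (by linarith : (0:ℝ) < 1 + 2 * α ^ 2 + m - γ), hm2]

theorem transverse_iff_mu_interval (α γ θ l : ℝ) (hα : α ≠ 0) (hγ : 0 < γ)
    (hl : 0 < l) (hθ : Real.cos θ * Real.sin θ = 0) :
    (∀ v : ℝ × ℝ, v ≠ 0 → det2 (Ynode γ v) (Zfun α l θ v) ≠ 0) ↔
      (1 + 2 * α ^ 2 - 2 * |α| * Real.sqrt (1 + α ^ 2) < γ ∧
        γ < 1 + 2 * α ^ 2 + 2 * |α| * Real.sqrt (1 + α ^ 2)) := by
  have hl' : l ≠ 0 := ne_of_gt hl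
  set c := Real.cos θ with hcdef
  set s := Real.sin θ with hsdef
  have hcs : c ^ 2 + s ^ 2 = 1 := Real.cos_sq_add_sin_sq θ
  set a := α * (s ^ 2 * l + c ^ 2 / l) with hadef
  set b := α * (c ^ 2 * l + s ^ 2 / l) with hbdef
  -- the matrix of Z
  have hZ : Zmat α l θ = !![1, -a; b, 1] := by
    ext i j
    fin_cases i <;> fin_cases j
    · simp [Zmat, rotM, BM, Mlog, BMinv, Matrix.mul_apply, Fin.sum_univ_two,
        Real.cos_neg, Real.sin_neg, ← hcdef, ← hsdef]
      field_simp
      linear_combination (α - α * l ^ 2) * hθ + l * hcs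
    · simp [Zmat, rotM, BM, Mlog, BMinv, Matrix.mul_apply, Fin.sum_univ_two,
        Real.cos_neg, Real.sin_neg, ← hcdef, ← hsdef, hadef]
      field_simp
      ring
    · simp [Zmat, rotM, BM, Mlog, BMinv, Matrix.mul_apply, Fin.sum_univ_two,
        Real.cos_neg, Real.sin_neg, ← hcdef, ← hsdef, hbdef]
      field_simp
      ring
    · simp [Zmat, rotM, BM, Mlog, BMinv, Matrix.mul_apply, Fin.sum_univ_two,
        Real.cos_neg, Real.sin_neg, ← hcdef, ← hsdef]
      field_simp
      linear_combination (α * l ^ 2 - α) * hθ + l * hcs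
  -- product of the off-diagonal coefficients
  have h2 : c ^ 2 * s ^ 2 = 0 := by nlinarith [hθ, sq_nonneg (c * s)]
  have hab : a * b = α ^ 2 := by
    rw [hadef, hbdef]
    field_simp
    linear_combination (l ^ 4 + 1 - 2 * l ^ 2) * h2 +
      l ^ 2 * (c ^ 2 + s ^ 2 + 1) * hcs
  -- b ≠ 0
  have hpos : 0 < c ^ 2 * l + s ^ 2 / l := by
    rcases mul_eq_zero.mp hθ with h | h
    · have hs2 : s ^ 2 = 1 := by nlinarith
      rw [h, hs2]
      simpa using div_pos one_pos hl
    · have hc2 : c ^ 2 = 1 := by nlinarith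
      rw [h, hc2]
      simpa using hl
  have hb0 : b ≠ 0 := mul_ne_zero hα (ne_of_gt hpos)
  -- the determinant is a quadratic form
  have hdet : ∀ v : ℝ × ℝ,
      det2 (Ynode γ v) (Zfun α l θ v)
        = b * v.1 ^ 2 + (1 - γ) * (v.1 * v.2) + (γ * a) * v.2 ^ 2 := by
    intro v
    simp [det2, Ynode, Zfun, hZ, Matrix.mulVec, dotProduct, Fin.sum_univ_two]
    ring
  clear_value a b
  rw [← disc_iff_mu α γ hα,
    show (1 - γ) ^ 2 - 4 * (γ * α ^ 2) * 1 = (1 - γ) ^ 2 - 4 * (γ * a) * b from by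
      linear_combination (4 * γ) * hab,
    ← quad_pos_iff (γ * a) b (1 - γ) hb0]
  constructor
  · intro hall x y hxy
    have hv : ((x, y) : ℝ × ℝ) ≠ 0 := by
      intro h
      rw [Prod.ext_iff] at h
      exact hxy h
    have := hall (x, y) hv
    rw [hdet] at this
    exact this
  · intro hall v hv
    rw [hdet]
    apply hall
    intro h
    exact hv (Prod.ext h.1 h.2)
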